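/- arXiv:math/0305007 — 2 statements merged into one kernel-verified Lean document; each statement's English description precedes it below -/
import Mathlib

section
/- Let φ ∈ L²(ℝ^d) and ε > 0, and define the unfolding T_ε(φ)(x,y) = φ(ε[x/ε]_Y + εy) for x ∈ ℝ^d, y ∈ Y = [0,1)^d. Then ∫_{ℝ^d} ∫_Y |T_ε(φ)(x,y)|² dy dx = ∫_{ℝ^d} |φ(z)|² dz, i.e. the unfolding operator is an isometry from L²(ℝ^d) into L²(ℝ^d × Y). -/
open MeasureTheory

section aux

variable {d : ℕ}

/-- floor characterization of cell membership -/
lemma cell_mem_iff {ε : ℝ} (hε : 0 < ε) (k : ℤ) (z : ℝ) :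
    z ∈ Set.Ico (ε * k) (ε * k + ε) ↔ ⌊z / ε⌋ = k := by
  rw [Int.floor_eq_iff]
  constructor
  · rintro ⟨h1, h2⟩
    constructor
    · rw [le_div_iff₀ hε]; linarith [h1]
    · rw [div_lt_iff₀ hε]; linarith [h2]
  · rintro ⟨h1, h2⟩
    rw [le_div_iff₀ hε] at h1
    rw [div_lt_iff₀ hε] at h2
    constructor
    · linarith
    · linarith

/-- Step A: change of variables `y ↦ a + ε • y` from the unit cell to the shifted cell. -/
lemma stepA (f : (Fin d → ℝ) → ENNReal) (hf : Measurable f)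
    (ε : ℝ) (hε : 0 < ε) (a : Fin d → ℝ) :
    ∫⁻ y in Set.pi Set.univ (fun _ : Fin d => Set.Ico (0 : ℝ) 1),
        f (fun i => a i + ε * y i) ∂volume
      = ENNReal.ofReal ((ε ^ d)⁻¹) *
          ∫⁻ z, (Set.pi Set.univ (fun i : Fin d => Set.Ico (a i) (a i + ε))).indicator f z
            ∂volume := by
  set Y : Set (Fin d → ℝ) := Set.pi Set.univ (fun _ : Fin d => Set.Ico (0 : ℝ) 1) with hY
  set C : Set (Fin d → ℝ) := Set.pi Set.univ (fun i : Fin d => Set.Ico (a i) (a i + ε)) with hC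
  have hCm : MeasurableSet C := MeasurableSet.univ_pi fun i => measurableSet_Ico
  have key : ∀ y : Fin d → ℝ,
      Y.indicator (fun y => f (fun i => a i + ε * y i)) y
        = C.indicator f (fun i => a i + ε * y i) := by
    intro y
    by_cases hy : y ∈ Y
    · rw [Set.indicator_of_mem hy, Set.indicator_of_mem]
      intro i _
      have h := hy i (Set.mem_univ i)
      simp only [Set.mem_Ico] at h ⊢
      constructor
      · nlinarith [h.1, hε]
      · nlinarith [h.2, hε]
    · rw [Set.indicator_of_notMem hy, Set.indicator_of_notMem]
      intro hmem
      apply hy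
      intro i _
      have h := hmem i (Set.mem_univ i)
      simp only [Set.mem_Ico] at h ⊢
      constructor
      · nlinarith [h.1, hε]
      · nlinarith [h.2, hε]
  have hYm : MeasurableSet Y := MeasurableSet.univ_pi fun i => measurableSet_Ico
  rw [← lintegral_indicator hYm]
  simp_rw [key]
  -- now ∫⁻ y, C.indicator f (a + ε • y)
  have hsm : Measurable fun y : Fin d → ℝ => (fun i => a i + ε * y i) := by
    exact measurable_pi_lambda _ fun i =>
      (measurable_const.add ((measurable_pi_apply (X := fun _ : Fin d => ℝ) i).const_mul ε))
  have hind : Measurable (C.indicator f) := hf.indicator hCm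
  -- decompose: a + ε • y = (fun z => a + z) (ε • y)
  have h1 : ∀ y : Fin d → ℝ, (fun i => a i + ε * y i) = a + ε • y := by
    intro y; funext i; simp [mul_comm]
  simp_rw [h1]
  have h2 : ∫⁻ y, C.indicator f (a + ε • y) ∂volume
      = ∫⁻ y, (fun z => C.indicator f (a + z)) (ε • y) ∂volume := rfl
  rw [h2]
  have hg : Measurable fun z : Fin d → ℝ => C.indicator f (a + z) :=
    hind.comp (measurable_const.add measurable_id)
  rw [← lintegral_map hg (measurable_const_smul ε)]
  rw [Measure.map_addHaar_smul volume hε.ne']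
  rw [lintegral_smul_measure]
  have hfr : Module.finrank ℝ (Fin d → ℝ) = d := by
    simp [Module.finrank_pi]
  rw [hfr]
  have habs : |(ε ^ d)⁻¹| = (ε ^ d)⁻¹ := abs_of_nonneg (by positivity)
  rw [habs]
  congr 1
  exact lintegral_add_left_eq_self (C.indicator f) a

end aux

/-- The unfolding operator `T_ε(φ)(x,y) = φ(ε[x/ε]_Y + εy)` is an isometry from `L²(ℝ^d)`
into `L²(ℝ^d × Y)`: `∫_{ℝ^d} ∫_Y |T_ε(φ)(x,y)|² dy dx = ∫_{ℝ^d} |φ(z)|² dz`. -/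
theorem stmt_12 (d : ℕ) (φ : (Fin d → ℝ) → ℝ) (hφ : Measurable φ)
    (ε : ℝ) (hε : 0 < ε) :
    ∫⁻ x : Fin d → ℝ, ∫⁻ y in Set.pi Set.univ (fun _ : Fin d => Set.Ico (0 : ℝ) 1),
        ENNReal.ofReal ((φ (fun i => ε * (⌊x i / ε⌋ : ℝ) + ε * y i)) ^ 2) ∂volume ∂volume
      = ∫⁻ z : Fin d → ℝ, ENNReal.ofReal ((φ z) ^ 2) ∂volume := by
  set f : (Fin d → ℝ) → ENNReal := fun z => ENNReal.ofReal ((φ z) ^ 2) with hfdef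
  have hf : Measurable f := (hφ.pow_const 2).ennreal_ofReal
  -- apply step A pointwise in x
  have hA : ∀ x : Fin d → ℝ,
      ∫⁻ y in Set.pi Set.univ (fun _ : Fin d => Set.Ico (0 : ℝ) 1),
          f (fun i => ε * (⌊x i / ε⌋ : ℝ) + ε * y i) ∂volume
        = ENNReal.ofReal ((ε ^ d)⁻¹) *
            ∫⁻ z, (Set.pi Set.univ (fun i : Fin d =>
              Set.Ico (ε * (⌊x i / ε⌋ : ℝ)) (ε * (⌊x i / ε⌋ : ℝ) + ε))).indicator f z ∂volume := by
    intro x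
    exact stepA f hf ε hε (fun i => ε * (⌊x i / ε⌋ : ℝ))
  calc
    ∫⁻ x : Fin d → ℝ, ∫⁻ y in Set.pi Set.univ (fun _ : Fin d => Set.Ico (0 : ℝ) 1),
        f (fun i => ε * (⌊x i / ε⌋ : ℝ) + ε * y i) ∂volume ∂volume
      = ∫⁻ x : Fin d → ℝ, ENNReal.ofReal ((ε ^ d)⁻¹) *
          ∫⁻ z, (Set.pi Set.univ (fun i : Fin d =>
            Set.Ico (ε * (⌊x i / ε⌋ : ℝ)) (ε * (⌊x i / ε⌋ : ℝ) + ε))).indicator f z ∂volume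
          ∂volume := by
        exact lintegral_congr hA
    _ = ∫⁻ z : Fin d → ℝ, f z ∂volume := by
        -- rewrite indicator via floor condition, then Tonelli
        have hind : ∀ (x z : Fin d → ℝ),
            (Set.pi Set.univ (fun i : Fin d =>
              Set.Ico (ε * (⌊x i / ε⌋ : ℝ)) (ε * (⌊x i / ε⌋ : ℝ) + ε))).indicator f z
            = f z * {p : (Fin d → ℝ) × (Fin d → ℝ) |
                ∀ i, ⌊p.2 i / ε⌋ = ⌊p.1 i / ε⌋}.indicator 1 (x, z) := by
          intro x z
          by_cases hz : ∀ i, ⌊z i / ε⌋ = ⌊x i / ε⌋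
          · rw [Set.indicator_of_mem (Set.mem_univ_pi.mpr fun i =>
                (cell_mem_iff hε _ _).2 (hz i)),
              Set.indicator_of_mem (by exact hz : (x, z) ∈ _)]
            simp
          · rw [Set.indicator_of_notMem (by
                intro hmem
                exact hz fun i => (cell_mem_iff hε _ _).1 (Set.mem_univ_pi.mp hmem i)),
              Set.indicator_of_notMem (by exact hz : (x, z) ∉ _)]
            simp
        simp_rw [hind]
        -- pull constant in, swap integrals
        have hSm : MeasurableSet {p : (Fin d → ℝ) × (Fin d → ℝ) |
            ∀ i, ⌊p.2 i / ε⌋ = ⌊p.1 i / ε⌋} := by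
          have : {p : (Fin d → ℝ) × (Fin d → ℝ) | ∀ i, ⌊p.2 i / ε⌋ = ⌊p.1 i / ε⌋}
              = ⋂ i, {p : (Fin d → ℝ) × (Fin d → ℝ) | ⌊p.2 i / ε⌋ = ⌊p.1 i / ε⌋} := by
            ext p; simp [Set.mem_iInter]
          rw [this]
          refine MeasurableSet.iInter fun i => ?_
          have h1 : Measurable fun p : (Fin d → ℝ) × (Fin d → ℝ) => ⌊p.2 i / ε⌋ :=
            Int.measurable_floor.comp
              (((measurable_pi_apply (X := fun _ : Fin d => ℝ) i).comp measurable_snd).div_const ε)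
          have h2 : Measurable fun p : (Fin d → ℝ) × (Fin d → ℝ) => ⌊p.1 i / ε⌋ :=
            Int.measurable_floor.comp
              (((measurable_pi_apply (X := fun _ : Fin d => ℝ) i).comp measurable_fst).div_const ε)
          exact measurableSet_eq_fun h1 h2
        have hmeas : Measurable fun p : (Fin d → ℝ) × (Fin d → ℝ) =>
            f p.2 * {p : (Fin d → ℝ) × (Fin d → ℝ) |
              ∀ i, ⌊p.2 i / ε⌋ = ⌊p.1 i / ε⌋}.indicator 1 p :=
          (hf.comp measurable_snd).mul (measurable_one.indicator hSm)
        rw [lintegral_const_mul _ (by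
          exact Measurable.lintegral_prod_right (f := fun x z => f z * _) hmeas)]
        rw [lintegral_lintegral_swap hmeas.aemeasurable]
        -- inner integral over x
        have hinner : ∀ z : Fin d → ℝ,
            ∫⁻ x, f z * {p : (Fin d → ℝ) × (Fin d → ℝ) |
              ∀ i, ⌊p.2 i / ε⌋ = ⌊p.1 i / ε⌋}.indicator 1 (x, z) ∂volume
            = f z * ENNReal.ofReal (ε ^ d) := by
          intro z
          have hset : ∀ x : Fin d → ℝ,
              ({p : (Fin d → ℝ) × (Fin d → ℝ) |
                ∀ i, ⌊p.2 i / ε⌋ = ⌊p.1 i / ε⌋}.indicator 1 (x, z) : ENNReal)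
              = (Set.pi Set.univ (fun i : Fin d =>
                  Set.Ico (ε * (⌊z i / ε⌋ : ℝ)) (ε * (⌊z i / ε⌋ : ℝ) + ε))).indicator 1 x := by
            intro x
            by_cases hx : ∀ i, ⌊z i / ε⌋ = ⌊x i / ε⌋
            · rw [Set.indicator_of_mem (by exact hx : (x, z) ∈ _),
                Set.indicator_of_mem (Set.mem_univ_pi.mpr fun i =>
                  (cell_mem_iff hε _ _).2 (hx i).symm)]
              rfl
            · rw [Set.indicator_of_notMem (by exact hx : (x, z) ∉ _),
                Set.indicator_of_notMem (by
                  intro hmem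
                  exact hx fun i =>
                    ((cell_mem_iff hε _ _).1 (Set.mem_univ_pi.mp hmem i)).symm)]
          simp_rw [hset]
          rw [lintegral_const_mul _ (measurable_one.indicator
            (MeasurableSet.univ_pi fun i => measurableSet_Ico))]
          congr 1
          rw [lintegral_indicator_one (MeasurableSet.univ_pi fun i => measurableSet_Ico)]
          rw [Real.volume_pi_Ico]
          have : ∀ i : Fin d, ENNReal.ofReal (ε * (⌊z i / ε⌋ : ℝ) + ε - ε * (⌊z i / ε⌋ : ℝ))
              = ENNReal.ofReal ε := by intro i; ring_nf
          rw [Finset.prod_congr rfl fun i _ => this i]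
          rw [Finset.prod_const, ← ENNReal.ofReal_pow hε.le]
          simp
        simp_rw [hinner]
        rw [lintegral_mul_const _ hf, ← mul_assoc, mul_comm (ENNReal.ofReal ((ε ^ d)⁻¹)),
          mul_assoc]
        have : ENNReal.ofReal ((ε ^ d)⁻¹) * ENNReal.ofReal (ε ^ d) = 1 := by
          rw [← ENNReal.ofReal_mul (by positivity)]
          rw [inv_mul_cancel₀ (by positivity)]
          simp
        rw [this, mul_one]
end

section
/- Let H₁, H₂ be Hilbert spaces and L₁ : H₁ → H₁*, L₂ : H₂ → H₂* bounded operators induced by bounded coercive symmetric bilinear forms a₁, a₂ with coercivity constants c₁, c₂ > 0. Then the tensor product bilinear form a on H₁ ⊗ H₂ (the Hilbert tensor product) determined by a(u₁⊗u₂, v₁⊗v₂) = a₁(u₁,v₁) a₂(u₂,v₂) is bounded and coercive with coercivity constant c₁c₂; in particular, for every F ∈ (H₁ ⊗ H₂)* there is a unique C ∈ H₁ ⊗ H₂ with a(C, V) = F(V) for all V ∈ H₁ ⊗ H₂. -/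
open scoped RealInnerProductSpace

open Finset MatrixOrder in
private lemma schur_key {n : ℕ} (p B : Matrix (Fin n) (Fin n) ℝ) (hp : p.PosSemidef)
    (hB : ∀ x : Fin n → ℝ, 0 ≤ ∑ i, ∑ j, x i * x j * B i j) :
    0 ≤ ∑ i, ∑ j, p i j * B i j := by
  have hs2 : CFC.sqrt p ^ 2 = p := CFC.sq_sqrt p hp.nonneg
  set s := CFC.sqrt p with hs
  have hsym : ∀ i j, s i j = s j i := by
    intro i j
    have := (CFC.sqrt_nonneg p).1
    have := congrFun (congrFun this j) i
    simpa [Matrix.conjTranspose_apply] using this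
  have hpij : ∀ i j, p i j = ∑ k, s k i * s k j := by
    intro i j
    rw [← hs2, pow_two, Matrix.mul_apply]
    exact Finset.sum_congr rfl fun k _ => by rw [hsym i k]
  calc (0:ℝ) ≤ ∑ k, ∑ i, ∑ j, s k i * s k j * B i j :=
        Finset.sum_nonneg fun k _ => hB (s k)
    _ = ∑ i, ∑ j, p i j * B i j := by
        rw [Finset.sum_comm]
        refine Finset.sum_congr rfl fun i _ => ?_
        rw [Finset.sum_comm]
        refine Finset.sum_congr rfl fun j _ => ?_
        rw [hpij, Finset.sum_mul]

private lemma bilin_sum {H : Type*} [NormedAddCommGroup H] [InnerProductSpace ℝ H]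
    {n : ℕ} (b : H →L[ℝ] H →L[ℝ] ℝ) (v w : Fin n → H) (x y : Fin n → ℝ) :
    b (∑ i, x i • v i) (∑ j, y j • w j) = ∑ i, ∑ j, x i * y j * b (v i) (w j) := by
  rw [map_sum]
  simp only [ContinuousLinearMap.coe_sum', Finset.sum_apply, map_smul, map_sum,
    ContinuousLinearMap.coe_smul', Pi.smul_apply, smul_eq_mul, Finset.mul_sum, mul_assoc]
  rw [Finset.sum_comm]
  exact Finset.sum_congr rfl fun i _ => Finset.sum_congr rfl fun j _ => by ring

private lemma inner_sum_sum {H : Type*} [NormedAddCommGroup H] [InnerProductSpace ℝ H]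
    {n : ℕ} (v w : Fin n → H) (x y : Fin n → ℝ) :
    ⟪∑ i, x i • v i, ∑ j, y j • w j⟫ = ∑ i, ∑ j, x i * y j * ⟪v i, w j⟫ := by
  rw [sum_inner]
  simp only [real_inner_smul_left, inner_sum, real_inner_smul_right, Finset.mul_sum]
  exact Finset.sum_congr rfl fun i _ => Finset.sum_congr rfl fun j _ => by ring

private lemma sum_sub_mul {n : ℕ} (z : Fin n → ℝ) (A B : Fin n → Fin n → ℝ) (c : ℝ) :
    ∑ i, ∑ j, z i * z j * (A i j - c * B i j)
      = (∑ i, ∑ j, z i * z j * A i j) - c * ∑ i, ∑ j, z i * z j * B i j := by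
  rw [Finset.mul_sum, ← Finset.sum_sub_distrib]
  refine Finset.sum_congr rfl fun i _ => ?_
  rw [Finset.mul_sum, ← Finset.sum_sub_distrib]
  exact Finset.sum_congr rfl fun j _ => by ring

private lemma posSemidef_of_quad {n : ℕ} (M : Matrix (Fin n) (Fin n) ℝ)
    (hsym : ∀ i j, M i j = M j i)
    (h : ∀ z : Fin n → ℝ, 0 ≤ ∑ i, ∑ j, z i * z j * M i j) : M.PosSemidef := by
  refine Matrix.PosSemidef.of_dotProduct_mulVec_nonneg ?_ ?_
  · ext i j; simp [Matrix.conjTranspose_apply, hsym i j]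
  · intro z
    have hz := h z
    have : ∑ i, ∑ j, z i * z j * M i j = dotProduct (star z) (M.mulVec z) := by
      simp only [dotProduct, Matrix.mulVec, star_trivial, Finset.mul_sum]
      exact Finset.sum_congr rfl fun i _ => Finset.sum_congr rfl fun j _ => by ring
    rw [this] at hz
    exact hz

/-- Tensor products of coercive forms: let `T` be the Hilbert tensor product `H₁ ⊗ H₂`,
specified by a bounded bilinear map `m : H₁ × H₂ → T` with dense span of elementary tensors
and `⟪u₁⊗u₂, v₁⊗v₂⟫ = ⟪u₁,v₁⟫⟪u₂,v₂⟫`. If `a₁, a₂` are bounded symmetric coercive bilinear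
forms with coercivity constants `c₁, c₂ > 0` and `a` is the bounded bilinear form on `T`
determined by `a(u₁⊗u₂, v₁⊗v₂) = a₁(u₁,v₁) a₂(u₂,v₂)`, then `a` is coercive with constant
`c₁ c₂`, and for every `F ∈ T*` there is a unique `C ∈ T` with `a(C,V) = F(V)` for all `V`. -/
theorem stmt_16 (H₁ H₂ T : Type*)
    [NormedAddCommGroup H₁] [InnerProductSpace ℝ H₁] [CompleteSpace H₁]
    [NormedAddCommGroup H₂] [InnerProductSpace ℝ H₂] [CompleteSpace H₂]
    [NormedAddCommGroup T] [InnerProductSpace ℝ T] [CompleteSpace T]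
    (m : H₁ →L[ℝ] H₂ →L[ℝ] T)
    (hdense : Dense (Submodule.span ℝ (Set.range fun p : H₁ × H₂ => m p.1 p.2) : Set T))
    (hinner : ∀ u₁ u₂ v₁ v₂, ⟪m u₁ u₂, m v₁ v₂⟫ = ⟪u₁, v₁⟫ * ⟪u₂, v₂⟫)
    (a₁ : H₁ →L[ℝ] H₁ →L[ℝ] ℝ) (a₂ : H₂ →L[ℝ] H₂ →L[ℝ] ℝ)
    (c₁ c₂ : ℝ) (hc₁ : 0 < c₁) (hc₂ : 0 < c₂)
    (hsym₁ : ∀ u v, a₁ u v = a₁ v u) (hsym₂ : ∀ u v, a₂ u v = a₂ v u)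
    (hcoer₁ : ∀ u, c₁ * ‖u‖ ^ 2 ≤ a₁ u u) (hcoer₂ : ∀ u, c₂ * ‖u‖ ^ 2 ≤ a₂ u u)
    (a : T →L[ℝ] T →L[ℝ] ℝ)
    (ha : ∀ u₁ u₂ v₁ v₂, a (m u₁ u₂) (m v₁ v₂) = a₁ u₁ v₁ * a₂ u₂ v₂) :
    (∀ w : T, c₁ * c₂ * ‖w‖ ^ 2 ≤ a w w) ∧
    (∀ F : T →L[ℝ] ℝ, ∃! C : T, ∀ V : T, a C V = F V) := by
  -- Step 1: coercivity on the span of elementary tensors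
  have hspan : ∀ w ∈ Submodule.span ℝ (Set.range fun p : H₁ × H₂ => m p.1 p.2),
      c₁ * c₂ * ‖w‖ ^ 2 ≤ a w w := by
    intro w hw
    obtain ⟨c, hsupp, hsum⟩ := Submodule.mem_span_set.mp hw
    set n := c.support.card with hn
    let e : Fin n ≃ {t // t ∈ c.support} := c.support.equivFin.symm
    have hg : ∀ i : Fin n, ∃ u : H₁, ∃ v : H₂, c (e i) • ((e i : T)) = m u v := by
      intro i
      obtain ⟨p, hp⟩ := hsupp (e i).2
      exact ⟨c (e i) • p.1, p.2, by rw [← hp]; simp⟩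
    choose x y hxy using hg
    have hw' : w = ∑ i, m (x i) (y i) := by
      rw [← hsum, Finsupp.sum, ← Finset.sum_coe_sort c.support (fun t => c t • t)]
      rw [← Equiv.sum_comp e (fun t : {t // t ∈ c.support} => c t • (t : T))]
      exact Finset.sum_congr rfl fun i _ => (hxy i)
    subst hw'
    -- expand both sides
    have haw : a (∑ i, m (x i) (y i)) (∑ j, m (x j) (y j))
        = ∑ i, ∑ j, a₁ (x i) (x j) * a₂ (y i) (y j) := by
      rw [map_sum]
      simp only [ContinuousLinearMap.coe_sum', Finset.sum_apply, map_sum, ha]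
      rw [Finset.sum_comm]
    have hnw : ‖(∑ i, m (x i) (y i))‖ ^ 2
        = ∑ i, ∑ j, ⟪x i, x j⟫ * ⟪y i, y j⟫ := by
      rw [← real_inner_self_eq_norm_sq, sum_inner]
      refine Finset.sum_congr rfl fun i _ => ?_
      rw [inner_sum]
      exact Finset.sum_congr rfl fun j _ => hinner _ _ _ _
    rw [haw, hnw]
    -- quadratic form identities
    have q1 : ∀ z : Fin n → ℝ, ∑ i, ∑ j, z i * z j * a₁ (x i) (x j)
        = a₁ (∑ i, z i • x i) (∑ j, z j • x j) := fun z => (bilin_sum a₁ x x z z).symm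
    have q2 : ∀ z : Fin n → ℝ, ∑ i, ∑ j, z i * z j * a₂ (y i) (y j)
        = a₂ (∑ i, z i • y i) (∑ j, z j • y j) := fun z => (bilin_sum a₂ y y z z).symm
    have g1 : ∀ z : Fin n → ℝ, ∑ i, ∑ j, z i * z j * ⟪x i, x j⟫
        = ‖(∑ i, z i • x i)‖ ^ 2 := fun z => by
      rw [← inner_sum_sum, real_inner_self_eq_norm_sq]
    have g2 : ∀ z : Fin n → ℝ, ∑ i, ∑ j, z i * z j * ⟪y i, y j⟫
        = ‖(∑ i, z i • y i)‖ ^ 2 := fun z => by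
      rw [← inner_sum_sum, real_inner_self_eq_norm_sq]
    -- two nonnegative correction terms
    have hD : 0 ≤ ∑ i, ∑ j, (a₁ (x i) (x j) - c₁ * ⟪x i, x j⟫) * (a₂ (y i) (y j)) := by
      refine schur_key (fun i j => a₁ (x i) (x j) - c₁ * ⟪x i, x j⟫)
        (fun i j => a₂ (y i) (y j)) (posSemidef_of_quad _ ?_ ?_) ?_
      · intro i j
        simp only [hsym₁ (x i) (x j), real_inner_comm (x i) (x j)]
      · intro z
        rw [show (∑ i, ∑ j, z i * z j *
            ((fun i j => a₁ (x i) (x j) - c₁ * ⟪x i, x j⟫ : Matrix (Fin n) (Fin n) ℝ) i j))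
            = ∑ i, ∑ j, z i * z j * (a₁ (x i) (x j) - c₁ * ⟪x i, x j⟫) from rfl,
          sum_sub_mul, q1, g1]
        have := hcoer₁ (∑ i, z i • x i)
        linarith
      · intro z
        rw [show (∑ i, ∑ j, z i * z j *
            ((fun i j => a₂ (y i) (y j) : Matrix (Fin n) (Fin n) ℝ) i j))
            = ∑ i, ∑ j, z i * z j * a₂ (y i) (y j) from rfl, q2]
        have := hcoer₂ (∑ i, z i • y i)
        nlinarith [sq_nonneg ‖(∑ i, z i • y i)‖]
    have hE : 0 ≤ ∑ i, ∑ j, ⟪x i, x j⟫ * (a₂ (y i) (y j) - c₂ * ⟪y i, y j⟫) := by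
      refine schur_key (fun i j => (⟪x i, x j⟫ : ℝ))
        (fun i j => a₂ (y i) (y j) - c₂ * ⟪y i, y j⟫) (posSemidef_of_quad _ ?_ ?_) ?_
      · intro i j
        simp only [real_inner_comm (x i) (x j)]
      · intro z
        rw [show (∑ i, ∑ j, z i * z j *
            ((fun i j => (⟪x i, x j⟫ : ℝ) : Matrix (Fin n) (Fin n) ℝ) i j))
            = ∑ i, ∑ j, z i * z j * ⟪x i, x j⟫ from rfl, g1]
        positivity
      · intro z
        rw [show (∑ i, ∑ j, z i * z j *
            ((a₂ (y i) (y j) - c₂ * ⟪y i, y j⟫) : ℝ))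
            = ∑ i, ∑ j, z i * z j * (a₂ (y i) (y j) - c₂ * ⟪y i, y j⟫) from rfl,
          sum_sub_mul, q2, g2]
        have := hcoer₂ (∑ i, z i • y i)
        linarith
    -- combine
    have expand : ∑ i, ∑ j, a₁ (x i) (x j) * a₂ (y i) (y j)
        - c₁ * c₂ * ∑ i, ∑ j, ⟪x i, x j⟫ * ⟪y i, y j⟫
        = (∑ i, ∑ j, (a₁ (x i) (x j) - c₁ * ⟪x i, x j⟫) * (a₂ (y i) (y j)))
          + c₁ * (∑ i, ∑ j, ⟪x i, x j⟫ * (a₂ (y i) (y j) - c₂ * ⟪y i, y j⟫)) := by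
      rw [Finset.mul_sum, Finset.mul_sum, ← Finset.sum_add_distrib, ← Finset.sum_sub_distrib]
      refine Finset.sum_congr rfl fun i _ => ?_
      rw [Finset.mul_sum, Finset.mul_sum, ← Finset.sum_add_distrib, ← Finset.sum_sub_distrib]
      refine Finset.sum_congr rfl fun j _ => ?_
      ring
    nlinarith [mul_nonneg hc₁.le hE]
  -- Step 2: extend by density
  have hcoer : ∀ w : T, c₁ * c₂ * ‖w‖ ^ 2 ≤ a w w := by
    have hclosed : IsClosed {w : T | c₁ * c₂ * ‖w‖ ^ 2 ≤ a w w} := by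
      apply isClosed_le
      · fun_prop
      · exact a.continuous₂.comp (continuous_id.prodMk continuous_id)
    intro w
    have := closure_minimal (fun z hz => hspan z hz) hclosed
    rw [hdense.closure_eq] at this
    exact this (Set.mem_univ w)
  refine ⟨hcoer, ?_⟩
  -- Step 3: Lax-Milgram
  have hcoe : IsCoercive a := by
    refine ⟨c₁ * c₂, mul_pos hc₁ hc₂, fun u => ?_⟩
    have := hcoer u
    rw [pow_two] at this
    linarith
  intro F
  refine ⟨hcoe.continuousLinearEquivOfBilin.symm ((InnerProductSpace.toDual ℝ T).symm F), ?_, ?_⟩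
  · intro V
    have := hcoe.continuousLinearEquivOfBilin_apply
      (hcoe.continuousLinearEquivOfBilin.symm ((InnerProductSpace.toDual ℝ T).symm F)) V
    rw [ContinuousLinearEquiv.apply_symm_apply] at this
    rw [← this, InnerProductSpace.toDual_symm_apply]
  · intro C' hC'
    have hall : ∀ V, a (hcoe.continuousLinearEquivOfBilin.symm
        ((InnerProductSpace.toDual ℝ T).symm F)) V = F V := by
      intro V
      have := hcoe.continuousLinearEquivOfBilin_apply
        (hcoe.continuousLinearEquivOfBilin.symm ((InnerProductSpace.toDual ℝ T).symm F)) V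
      rw [ContinuousLinearEquiv.apply_symm_apply] at this
      rw [← this, InnerProductSpace.toDual_symm_apply]
    set C := hcoe.continuousLinearEquivOfBilin.symm ((InnerProductSpace.toDual ℝ T).symm F)
    have hkey : ∀ V, a (C' - C) V = 0 := fun V => by
      rw [map_sub, ContinuousLinearMap.sub_apply, hC' V, hall V, sub_self]
    have hz : a (C' - C) (C' - C) = 0 := hkey (C' - C)
    have := hcoer (C' - C)
    rw [hz] at this
    have hn : ‖C' - C‖ ^ 2 ≤ 0 := by
      by_contra h
      push_neg at h
      nlinarith [mul_pos hc₁ hc₂]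
    have : ‖C' - C‖ = 0 := by nlinarith [norm_nonneg (C' - C), sq_nonneg ‖C' - C‖]
    have : C' - C = 0 := by rwa [norm_eq_zero] at this
    exact sub_eq_zero.mp this
end
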